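/- Let l ≥ 1, work in EuclideanSpace ℝ (Fin l) with standard orthonormal basis x₁, …, x_l, set α_i = x_i − x_{i+1} for 1 ≤ i ≤ l−1 and α_l = 2x_l, and set d_i = 2 for 1 ≤ i ≤ l−1 and d_l = 1. For each j let e_j be the unique vector with ⟨e_j, α_i⟩ = δ_{ij}/d_j for all i. Then e_j = (1/2) Σ_{k=1}^{j} x_k for all 1 ≤ j ≤ l, and max_{1≤j≤l} ‖e_j‖² = l/4. -/

import Mathlib

open scoped RealInnerProductSpace

/-- (2.11)–(2.12): the vertices `e_j` of the Cartan polyhedron facet for the root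
system `c_l` (simple roots `α_i = x_i − x_{i+1}` for `i < l`, `α_l = 2x_l`;
coefficients `d_i = 2` for `i < l`, `d_l = 1`) and the value `max_j ‖e_j‖² = l/4`.
Indices are zero-based: `i : Fin l` corresponds to `i+1` in the one-based
statement, so `d_j = 1` iff `(j : ℕ) + 1 = l`. -/
theorem stmt7 (l : ℕ) (hl : 1 ≤ l)
    (x : Fin l → EuclideanSpace ℝ (Fin l))
    (hx : ∀ i, x i = EuclideanSpace.single i (1 : ℝ))
    (α : Fin l → EuclideanSpace ℝ (Fin l))
    (hα : ∀ i : Fin l, α i =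
      if h : (i : ℕ) + 1 < l then x i - x ⟨(i : ℕ) + 1, h⟩ else (2 : ℝ) • x i)
    (e : Fin l → EuclideanSpace ℝ (Fin l))
    (he : ∀ i j, ⟪e j, α i⟫ =
      if i = j then (if (j : ℕ) + 1 = l then (1 : ℝ) else 1 / 2) else 0) :
    (∀ j : Fin l, e j = (1 / 2 : ℝ) •
        ∑ k ∈ Finset.univ.filter (fun k : Fin l => (k : ℕ) ≤ (j : ℕ)), x k) ∧
    Finset.univ.sup' (Finset.univ_nonempty_iff.mpr ⟨⟨0, hl⟩⟩)
        (fun j : Fin l => ‖e j‖ ^ 2) = (l : ℝ) / 4 := by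
  -- inner of e j with x i is coordinate
  have hcoord : ∀ (j i : Fin l), ⟪e j, x i⟫ = e j i := by
    intro j i
    rw [hx, EuclideanSpace.inner_single_right]
    simp
  -- key : coordinates of e j
  have key : ∀ n : ℕ, ∀ (j k : Fin l), l - (k : ℕ) ≤ n →
      e j k = if (k : ℕ) ≤ (j : ℕ) then (1 / 2 : ℝ) else 0 := by
    intro n
    induction n with
    | zero => intro j k h; omega
    | succ n ih =>
      intro j k h
      by_cases hk : (k : ℕ) + 1 < l
      · have h1 := he k j
        rw [hα k, dif_pos hk, inner_sub_right, hcoord, hcoord] at h1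
        have h2 := ih j ⟨(k : ℕ) + 1, hk⟩ (by simp; omega)
        simp only at h2
        by_cases hkj : k = j
        · subst hkj
          rw [if_pos rfl] at h1
          have : ¬ ((k : ℕ) + 1 = l) := by omega
          rw [if_neg this] at h1
          rw [if_neg (by omega)] at h2
          rw [if_pos le_rfl]
          have := Fin.is_lt k
          linarith [h1, h2]
        · rw [if_neg hkj] at h1
          by_cases hle : (k : ℕ) ≤ (j : ℕ)
          · have : (k : ℕ) + 1 ≤ (j : ℕ) := by
              rcases lt_or_eq_of_le hle with h' | h'
              · omega
              · exact absurd (Fin.ext h') hkj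
            rw [if_pos this] at h2
            rw [if_pos hle]
            linarith
          · rw [if_neg (by omega)] at h2
            rw [if_neg hle]
            linarith
      · -- last coordinate
        have hkl : (k : ℕ) + 1 = l := by have := Fin.is_lt k; omega
        have h1 := he k j
        rw [hα k, dif_neg hk, inner_smul_right, hcoord] at h1
        by_cases hkj : k = j
        · subst hkj
          rw [if_pos rfl, if_pos hkl] at h1
          rw [if_pos le_rfl]
          linarith
        · rw [if_neg hkj] at h1
          have : ¬ ((k : ℕ) ≤ (j : ℕ)) := by
            have := Fin.is_lt j
            intro hle
            exact hkj (Fin.ext (by omega))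
          rw [if_neg this]
          linarith
  have key' : ∀ (j k : Fin l), e j k = if (k : ℕ) ≤ (j : ℕ) then (1 / 2 : ℝ) else 0 :=
    fun j k => key l j k (by omega)
  have part1 : ∀ j : Fin l, e j = (1 / 2 : ℝ) •
      ∑ k ∈ Finset.univ.filter (fun k : Fin l => (k : ℕ) ≤ (j : ℕ)), x k := by
    intro j
    ext k
    rw [key']
    have : ((1 / 2 : ℝ) • ∑ k ∈ Finset.univ.filter (fun k : Fin l => (k : ℕ) ≤ (j : ℕ)), x k) k
        = (1 / 2 : ℝ) * ∑ k' ∈ Finset.univ.filter (fun k' : Fin l => (k' : ℕ) ≤ (j : ℕ)), (x k') k := by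
      rw [PiLp.smul_apply, smul_eq_mul]
      congr 1
      rw [WithLp.ofLp_sum]
      exact Finset.sum_apply k _ _
    rw [this]
    simp only [hx]
    rw [Finset.sum_congr rfl (fun k' _ => EuclideanSpace.single_apply k' 1 k)]
    rw [Finset.sum_ite_eq]
    have hmem : (k ∈ Finset.univ.filter (fun k' : Fin l => (k' : ℕ) ≤ (j : ℕ))) ↔ (k : ℕ) ≤ (j : ℕ) := by
      simp only [Finset.mem_filter, Finset.mem_univ, true_and]
    by_cases hkj : (k : ℕ) ≤ (j : ℕ)
    · rw [if_pos hkj, if_pos (hmem.mpr hkj)]; ring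
    · rw [if_neg hkj, if_neg (fun h => hkj (hmem.mp h))]; ring
  constructor
  · exact part1
  · -- norms
    have hnorm : ∀ j : Fin l, ‖e j‖ ^ 2 = ((j : ℕ) + 1 : ℝ) / 4 := by
      intro j
      rw [← real_inner_self_eq_norm_sq]
      rw [PiLp.inner_apply]
      have : ∀ k : Fin l, (e j k) * (e j k) = if (k : ℕ) ≤ (j : ℕ) then (1/4 : ℝ) else 0 := by
        intro k
        rw [key']
        split <;> norm_num
      simp only [RCLike.inner_apply, conj_trivial]
      rw [Finset.sum_congr rfl (fun k _ => this k)]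
      rw [← Finset.sum_filter, Finset.sum_const]
      have hcard : (Finset.univ.filter (fun k : Fin l => (k : ℕ) ≤ (j : ℕ))).card = (j : ℕ) + 1 := by
        have : Finset.univ.filter (fun k : Fin l => (k : ℕ) ≤ (j : ℕ)) = Finset.Iic j := by
          ext k
          simp only [Finset.mem_filter, Finset.mem_univ, true_and, Finset.mem_Iic, Fin.le_def]
        rw [this, Fin.card_Iic]
      rw [hcard, nsmul_eq_mul]
      push_cast
      ring
    apply le_antisymm
    · apply Finset.sup'_le
      intro j _
      rw [hnorm]
      have : ((j : ℕ) : ℝ) + 1 ≤ (l : ℝ) := by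
        have := Fin.is_lt j
        exact_mod_cast this
      linarith
    · have hlm : l - 1 < l := by omega
      have h1 : ‖e ⟨l - 1, hlm⟩‖ ^ 2 = (l : ℝ) / 4 := by
        rw [hnorm]
        have hj : (((⟨l - 1, hlm⟩ : Fin l) : ℕ) : ℝ) = (l : ℝ) - 1 := by
          simp only []
          rw [Nat.cast_sub hl]
          norm_num
        rw [hj]; ring
      rw [← h1]
      exact Finset.le_sup' (fun j : Fin l => ‖e j‖ ^ 2) (Finset.mem_univ _)
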